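/- Every unique guarded fixpoint category is a uniform guarded Conway category: if for every f : ◇X × Y → X the morphism f† is the unique solution of f, then the operator † satisfies the fixpoint identity (†), the parameter identity (P), the composition identity (C), the double dagger identity (††), and uniformity (U). -/

import Mathlib

open CategoryTheory CategoryTheory.Limits

universe v u

/-- A guarded Conway category structure: a guarded fixpoint operator `dag` satisfying the
fixpoint, parameter, (simplified) composition and double dagger identities. -/
structure IsGuardedConway {C : Type u} [Category.{v} C] [HasFiniteProducts C]
    (D : C ⥤ C) (p : 𝟭 C ⟶ D)
    (dag : ∀ {X Y : C}, (D.obj X ⨯ Y ⟶ X) → (Y ⟶ X)) : Prop where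
  fix : ∀ {X Y : C} (f : D.obj X ⨯ Y ⟶ X),
      dag f = prod.lift (dag f) (𝟙 Y) ≫ prod.map (p.app X) (𝟙 Y) ≫ f
  param : ∀ {X Y Z : C} (f : D.obj X ⨯ Y ⟶ X) (h : Z ⟶ Y),
      dag (prod.map (𝟙 (D.obj X)) h ≫ f) = h ≫ dag f
  comp : ∀ {X Y Z : C} (f : D.obj X ⨯ Y ⟶ Z) (g : Z ⟶ X),
      dag (f ≫ g) = dag (prod.map (D.map g) (𝟙 Y) ≫ f) ≫ g
  ddag : ∀ {X Y : C} (f : D.obj X ⨯ (D.obj X ⨯ Y) ⟶ X),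
      dag (dag f) = dag (prod.lift prod.fst (𝟙 (D.obj X ⨯ Y)) ≫ f)

/-- **Every unique guarded fixpoint category is a uniform guarded Conway category.**
If for every `f : ◇X × Y ⟶ X` the morphism `f†` is the unique solution of the fixpoint
equation `s = f ∘ (p_X × id_Y) ∘ ⟨s, id_Y⟩`, then `†` satisfies the Conway axioms
(fixpoint, parameter, composition, double dagger) and uniformity. -/
theorem uniqueGuardedFixpoint_isUniformGuardedConway
    {C : Type u} [Category.{v} C] [HasFiniteProducts C]
    (D : C ⥤ C) (p : 𝟭 C ⟶ D)
    (dag : ∀ {X Y : C}, (D.obj X ⨯ Y ⟶ X) → (Y ⟶ X))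
    -- `dag f` is a solution
    (hfix : ∀ {X Y : C} (f : D.obj X ⨯ Y ⟶ X),
      dag f = prod.lift (dag f) (𝟙 Y) ≫ prod.map (p.app X) (𝟙 Y) ≫ f)
    -- and it is the unique one
    (huniq : ∀ {X Y : C} (f : D.obj X ⨯ Y ⟶ X) (s : Y ⟶ X),
      s = prod.lift s (𝟙 Y) ≫ prod.map (p.app X) (𝟙 Y) ≫ f → s = dag f) :
    IsGuardedConway D p @dag ∧
    -- (U) uniformity
    (∀ {X X' Y : C} (f : D.obj X ⨯ Y ⟶ X) (g : D.obj X' ⨯ Y ⟶ X') (h : X ⟶ X'),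
      f ≫ h = prod.map (D.map h) (𝟙 Y) ≫ g → dag f ≫ h = dag g) := by
  have pnat : ∀ {A B : C} (h : A ⟶ B), h ≫ p.app B = p.app A ≫ D.map h := by
    intro A B h; simpa using p.naturality h
  refine ⟨⟨hfix, ?_, ?_, ?_⟩, ?_⟩
  · -- param
    intro X Y Z f h
    symm
    apply huniq
    conv_lhs => rw [hfix f]
    simp [prod.lift_map_assoc, prod.comp_lift_assoc]
  · -- comp
    intro X Y Z f g
    symm
    apply huniq
    conv_lhs => rw [hfix (prod.map (D.map g) (𝟙 Y) ≫ f)]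
    simp only [prod.lift_map_assoc, Category.comp_id, prod.map_map_assoc, Category.id_comp,
      Category.assoc]
    rw [← pnat g]
  · -- ddag
    intro X Y f
    apply huniq
    have h1 := hfix f
    have h2 := hfix (dag f)
    have key : prod.lift (dag (dag f) ≫ p.app X) (𝟙 Y) ≫ dag f = dag (dag f) := by
      conv_rhs => rw [h2]
      simp [prod.lift_map_assoc]
    calc dag (dag f) = prod.lift (dag (dag f) ≫ p.app X) (𝟙 Y) ≫ dag f := key.symm
      _ = prod.lift (dag (dag f) ≫ p.app X) (𝟙 Y) ≫ prod.lift (dag f) (𝟙 (D.obj X ⨯ Y)) ≫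
            prod.map (p.app X) (𝟙 (D.obj X ⨯ Y)) ≫ f := by rw [← h1]
      _ = prod.lift (dag (dag f) ≫ p.app X)
            (prod.lift (dag (dag f) ≫ p.app X) (𝟙 Y)) ≫ f := by
          simp [prod.comp_lift_assoc, prod.lift_map_assoc, key, reassoc_of% key]
      _ = prod.lift (dag (dag f)) (𝟙 Y) ≫ prod.map (p.app X) (𝟙 Y) ≫
            prod.lift prod.fst (𝟙 (D.obj X ⨯ Y)) ≫ f := by
          simp [prod.lift_map_assoc, prod.comp_lift_assoc, prod.lift_fst_assoc]
  · -- uniformity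
    intro X X' Y f g h hcomm
    apply huniq
    conv_lhs => rw [hfix f]
    simp only [Category.assoc, hcomm]
    simp [prod.lift_map_assoc, ← prod.map_map_assoc, pnat h]
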